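/- For every quantitative MPRS game there exist a memoryless deterministic Nash-equilibrium profile σ̂ = (σ̂^1,...,σ̂^N) and value functions u^m : S → ℝ defined by u^m(s) := Q^m(s, σ̂), which satisfy the equilibrium equations: for every player n and every state s ∈ V_n \ R, the action σ̂^n(s) attains the maximum over out-neighbours a of s of the quantity q^n(s) + γ·u^n(a); and for every pair of players n, m and every state s ∈ V_n \ R, u^m(s) = q^m(s) + γ·u^m(σ̂^n(s)), while for every state s ∈ R ∪ {s̄} and every m, u^m(s) = q^m(s) + γ·u^m(s̄). -/

import Mathlib

/-- A multi-player reachability/safety (MPRS) game on a finite vertex type `V`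
with `N` players.  `succ v` is the (nonempty) set of out-neighbours of `v`,
`owner v` is the player who moves at `v` (the partition `V = V₁ ∪ ... ∪ V_N`),
`target n` is player `n`'s nonempty target set `R_n`, `reacher n` tells whether
player `n` is a reacher (`true`) or an avoider (`false`), and `gamma` is the
discount factor. -/
structure MPRS (V : Type) [Fintype V] [DecidableEq V] (N : ℕ) where
  succ : V → Finset V
  succ_nonempty : ∀ v, (succ v).Nonempty
  owner : V → Fin N
  target : Fin N → Finset V
  target_nonempty : ∀ n, (target n).Nonempty
  reacher : Fin N → Bool
  gamma : ℝ
  gamma_pos : 0 < gamma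
  gamma_lt_one : gamma < 1

namespace MPRS

/-- A deterministic, possibly history-dependent strategy: given the list of past
states and the current vertex, choose a next vertex.  (`none` is the terminal
state `s̄`; a strategy is only ever consulted at non-target vertices owned by
the player, where it must choose an out-neighbour.) -/
abbrev Strat (V : Type) := List (Option V) → V → V

/-- A strategy is memoryless if it depends only on the current state. -/
def Memoryless {V : Type} (σ : Strat V) : Prop := ∀ h h' v, σ h v = σ h' v

variable {V : Type} [Fintype V] [DecidableEq V] {N : ℕ} (g : MPRS V N)

/-- The total target set `R = R₁ ∪ ... ∪ R_N`. -/
def totalTarget : Finset V := Finset.univ.biUnion g.target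

/-- Validity of a strategy for player `n`: at any history ending in a vertex
`v ∈ V_n \ R`, it chooses an out-neighbour of `v`. -/
def ValidStrat (n : Fin N) (σ : Strat V) : Prop :=
  ∀ (h : List (Option V)) (v : V), g.owner v = n → v ∉ g.totalTarget → σ h v ∈ g.succ v

/-- One step of the deterministic dynamics under profile `σ`, given past
history `h` and current state `s`.  From a target or terminal state the next
state is the terminal state `none`. -/
def step (σ : Fin N → Strat V) (h : List (Option V)) (s : Option V) : Option V :=
  match s with
  | none => none
  | some v => if v ∈ g.totalTarget then none else some (σ (g.owner v) h v)

/-- Auxiliary play function carrying the history. -/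
def playAux (g : MPRS V N) (σ : Fin N → Strat V) : ℕ → List (Option V) → Option V → Option V
  | 0, _, s => s
  | t + 1, h, s => playAux g σ t (h ++ [s]) (g.step σ h s)

/-- The induced play: `play σ s₀ t` is the state `s_t` of the unique play
determined by the profile `σ` and the initial state `s₀`. -/
def play (σ : Fin N → Strat V) (s₀ : Option V) (t : ℕ) : Option V :=
  g.playAux σ t [] s₀

/-- Player `n`'s turn payoff `q^n`. -/
def q (n : Fin N) : Option V → ℝ
  | none => 0
  | some v => if v ∈ g.target n then (if g.reacher n then 1 else -1) else 0

/-- Player `n`'s total quantitative payoff `Q^n(s₀, σ) = ∑ γ^t q^n(s_t)`. -/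
noncomputable def Q (n : Fin N) (s₀ : Option V) (σ : Fin N → Strat V) : ℝ :=
  ∑' t : ℕ, g.gamma ^ t * g.q n (g.play σ s₀ t)

/-- Player `n`'s qualitative payoff `Q̃^n(s₀, σ)`. -/
noncomputable def Qtil (n : Fin N) (s₀ : Option V) (σ : Fin N → Strat V) : ℝ :=
  if 0 < g.Q n s₀ σ then 1 else if g.Q n s₀ σ < 0 then -1 else 0

end MPRS
namespace MPRSNE

open MPRS Classical

variable {V : Type} [Fintype V] [DecidableEq V] {N : ℕ}

/-- `Good n τ`: the endpoint `τ` is a "good" outcome for player `n`'s owner: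
for a reacher, hitting their own target; for an avoider, hitting a target not
their own (payoff `0`, the best an avoider can get). -/
def Good (g : MPRS V N) (n : Fin N) (τ : V) : Prop :=
  if g.reacher n then τ ∈ g.target n else τ ∉ g.target n

/-- One stage of the decision process.  A record `(j, c, τ)` at `v` means `v`
has been decided at level `j`, choosing successor `c`, with final endpoint
target `τ`. -/
noncomputable def stateStep (g : MPRS V N) (s : V → Option (ℕ × V × V)) (ℓ : ℕ) (v : V) :
    Option (ℕ × V × V) :=
  if (s v).isSome then s v
  else if h1 : ∃ p : V × V, p.1 ∈ g.succ v ∧ (∃ c, s p.1 = some (ℓ, c, p.2)) ∧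
      Good g (g.owner v) p.2 then
    some (ℓ + 1, h1.choose.1, h1.choose.2)
  else if h2 : (∀ b ∈ g.succ v, (s b).isSome) ∧
      (∃ p : V × V, p.1 ∈ g.succ v ∧ ∃ c, s p.1 = some (ℓ, c, p.2)) ∧
      (∀ b ∈ g.succ v, ∀ j c τ, s b = some (j, c, τ) → ¬ Good g (g.owner v) τ) then
    some (ℓ + 1, h2.2.1.choose.1, h2.2.1.choose.2)
  else none

/-- The cumulative decision state after `ℓ` stages. -/
noncomputable def state (g : MPRS V N) : ℕ → V → Option (ℕ × V × V)
  | 0 => fun v => if v ∈ g.totalTarget then some (0, v, v) else none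
  | ℓ + 1 => stateStep g (state g ℓ) ℓ

lemma stateStep_some {g : MPRS V N} {s : V → Option (ℕ × V × V)} {ℓ : ℕ} {v : V}
    {r : ℕ × V × V} (h : s v = some r) : stateStep g s ℓ v = some r := by
  rw [stateStep, if_pos (by simp [h])]; exact h

lemma state_mono {g : MPRS V N} {ℓ : ℕ} {v : V} {r : ℕ × V × V}
    (h : state g ℓ v = some r) : state g (ℓ + 1) v = some r :=
  stateStep_some h

lemma state_mono_le {g : MPRS V N} {ℓ ℓ' : ℕ} (hle : ℓ ≤ ℓ') {v : V} {r : ℕ × V × V}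
    (h : state g ℓ v = some r) : state g ℓ' v = some r := by
  induction ℓ', hle using Nat.le_induction with
  | base => exact h
  | succ k hk ih => exact state_mono ih

/-- New records at stage `ℓ+1` (when `v` was undecided): structure extraction. -/
lemma stateStep_none_cases {g : MPRS V N} {s : V → Option (ℕ × V × V)} {ℓ : ℕ} {v : V}
    {r : ℕ × V × V} (hsv : s v = none) (hres : stateStep g s ℓ v = some r) :
    r.1 = ℓ + 1 ∧ r.2.1 ∈ g.succ v ∧ (∃ c, s r.2.1 = some (ℓ, c, r.2.2)) ∧
      (Good g (g.owner v) r.2.2 ∨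
        ∀ b ∈ g.succ v, ∃ j c τb, s b = some (j, c, τb) ∧ ¬ Good g (g.owner v) τb) := by
  rw [stateStep, if_neg (by simp [hsv])] at hres
  by_cases h1 : ∃ p : V × V, p.1 ∈ g.succ v ∧ (∃ c, s p.1 = some (ℓ, c, p.2)) ∧
      Good g (g.owner v) p.2
  · rw [dif_pos h1] at hres
    obtain ⟨hmem, hrec, hgood⟩ := h1.choose_spec
    cases hres.symm
    exact ⟨rfl, hmem, hrec, Or.inl hgood⟩
  · rw [dif_neg h1] at hres
    by_cases h2 : (∀ b ∈ g.succ v, (s b).isSome) ∧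
        (∃ p : V × V, p.1 ∈ g.succ v ∧ ∃ c, s p.1 = some (ℓ, c, p.2)) ∧
        (∀ b ∈ g.succ v, ∀ j c τ, s b = some (j, c, τ) → ¬ Good g (g.owner v) τ)
    · rw [dif_pos h2] at hres
      obtain ⟨hmem, hrec⟩ := h2.2.1.choose_spec
      cases hres.symm
      refine ⟨rfl, hmem, hrec, Or.inr ?_⟩
      intro b hb
      obtain ⟨rb, hrb⟩ := Option.isSome_iff_exists.mp (h2.1 b hb)
      exact ⟨rb.1, rb.2.1, rb.2.2, hrb, h2.2.2 b hb rb.1 rb.2.1 rb.2.2 hrb⟩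
    · rw [dif_neg h2] at hres; exact absurd hres (by simp)

lemma state_zero_mem {g : MPRS V N} {v : V} (h : v ∈ g.totalTarget) :
    state g 0 v = some (0, v, v) := by simp [state, h]

lemma state_zero_not_mem {g : MPRS V N} {v : V} (h : v ∉ g.totalTarget) :
    state g 0 v = none := by simp [state, h]

/-- Every record was created at the stage equal to its level. -/
lemma state_created {g : MPRS V N} {ℓ : ℕ} {v : V} {r : ℕ × V × V}
    (h : state g ℓ v = some r) : r.1 ≤ ℓ ∧ state g r.1 v = some r := by
  induction ℓ with
  | zero =>
    by_cases hv : v ∈ g.totalTarget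
    · rw [state_zero_mem hv] at h; cases h; exact ⟨le_refl _, state_zero_mem hv⟩
    · rw [state_zero_not_mem hv] at h; exact absurd h (by simp)
  | succ k ih =>
    cases hk : state g k v with
    | some r' =>
      have := state_mono (g := g) hk
      rw [this] at h; cases h
      obtain ⟨h1, h2⟩ := ih hk
      exact ⟨h1.trans (Nat.le_succ k), h2⟩
    | none =>
      have hc := stateStep_none_cases (g := g) hk h
      exact ⟨hc.1.le, by rw [hc.1]; exact h⟩

lemma state_target {g : MPRS V N} (ℓ : ℕ) {v : V} (h : v ∈ g.totalTarget) :
    state g ℓ v = some (0, v, v) :=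
  state_mono_le (Nat.zero_le ℓ) (state_zero_mem h)

lemma state_level_zero {g : MPRS V N} {ℓ : ℕ} {v c τ : V}
    (h : state g ℓ v = some (0, c, τ)) : v ∈ g.totalTarget ∧ c = v ∧ τ = v := by
  obtain ⟨-, h0⟩ := state_created h
  by_cases hv : v ∈ g.totalTarget
  · rw [state_zero_mem hv] at h0; cases h0; exact ⟨hv, rfl, rfl⟩
  · rw [state_zero_not_mem hv] at h0; exact absurd h0 (by simp)

/-- Structure of a record at a non-target vertex. -/
lemma state_rec_structure {g : MPRS V N} {ℓ : ℕ} {v : V} {j : ℕ} {c τ : V}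
    (hv : v ∉ g.totalTarget) (h : state g ℓ v = some (j, c, τ)) :
    ∃ j', j = j' + 1 ∧ c ∈ g.succ v ∧ (∃ c', state g j' c = some (j', c', τ)) ∧
      (Good g (g.owner v) τ ∨
        ∀ b ∈ g.succ v, ∃ jb cb τb, state g j' b = some (jb, cb, τb) ∧ jb ≤ j' ∧
          ¬ Good g (g.owner v) τb) := by
  obtain ⟨-, hcr⟩ := state_created h
  cases j with
  | zero => exact absurd (state_level_zero hcr).1 hv
  | succ j' =>
    have hnone : state g j' v = none := by
      cases hj' : state g j' v with
      | none => rfl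
      | some r' =>
        have := state_mono_le (Nat.le_succ j') hj'
        rw [this] at hcr; cases hcr
        obtain ⟨hle, -⟩ := state_created hj'
        omega
    have hc := stateStep_none_cases (g := g) hnone hcr
    obtain ⟨-, hmem, hrec, hdich⟩ := hc
    refine ⟨j', rfl, hmem, hrec, ?_⟩
    rcases hdich with hg | hbad
    · exact Or.inl hg
    · refine Or.inr fun b hb => ?_
      obtain ⟨jb, cb, τb, hrb, hng⟩ := hbad b hb
      exact ⟨jb, cb, τb, hrb, (state_created hrb).1, hng⟩

end MPRSNE

namespace MPRSNE

open MPRS Classical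

variable {V : Type} [Fintype V] [DecidableEq V] {N : ℕ}

/-- If a stage adds nothing, the next stage adds nothing either. -/
lemma state_stall_step {g : MPRS V N} {ℓ : ℕ} (h : state g (ℓ + 1) = state g ℓ) :
    state g (ℓ + 2) = state g (ℓ + 1) := by
  funext v
  cases hv : state g (ℓ + 1) v with
  | some r => exact stateStep_some hv
  | none =>
    show stateStep g (state g (ℓ + 1)) (ℓ + 1) v = none
    have hnolev : ∀ a : V, ¬ ∃ c τ, state g (ℓ + 1) a = some (ℓ + 1, c, τ) := by
      rintro a ⟨c, τ, ha⟩
      rw [h] at ha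
      obtain ⟨hle, -⟩ := state_created ha
      omega
    rw [stateStep, if_neg (by simp [hv]), dif_neg, dif_neg]
    · rintro ⟨-, ⟨p, -, hc, hrec⟩, -⟩
      exact hnolev p.1 ⟨hc, p.2, hrec⟩
    · rintro ⟨p, -, ⟨c, hrec⟩, -⟩
      exact hnolev p.1 ⟨c, p.2, hrec⟩

lemma state_stall_ge {g : MPRS V N} {ℓ : ℕ} (h : state g (ℓ + 1) = state g ℓ) :
    ∀ k, ℓ ≤ k → state g (k + 1) = state g k := by
  intro k hk
  induction k, hk using Nat.le_induction with
  | base => exact h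
  | succ m hm ih => exact state_stall_step ih

/-- The number of stages after which the process has surely stabilised. -/
noncomputable def M (g : MPRS V N) : ℕ := Fintype.card V + 1

/-- Some stage `≤ card V` adds nothing. -/
lemma exists_stall (g : MPRS V N) : ∃ ℓ ≤ Fintype.card V, state g (ℓ + 1) = state g ℓ := by
  by_contra hcon
  push_neg at hcon
  have hgrow : ∀ ℓ ≤ Fintype.card V,
      (Finset.univ.filter fun v => (state g ℓ v).isSome).card <
      (Finset.univ.filter fun v => (state g (ℓ + 1) v).isSome).card := by
    intro ℓ hℓ
    apply Finset.card_lt_card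
    constructor
    · intro v hv
      simp only [Finset.mem_filter, Finset.mem_univ, true_and] at hv ⊢
      obtain ⟨r, hr⟩ := Option.isSome_iff_exists.mp hv
      simp [state_mono hr]
    · intro hsub
      apply hcon ℓ hℓ
      funext v
      cases hv : state g ℓ v with
      | some r => exact state_mono hv
      | none =>
        cases hv' : state g (ℓ + 1) v with
        | none => rfl
        | some r' =>
          have : v ∈ Finset.univ.filter fun v => (state g ℓ v).isSome :=
            hsub (by simp [hv'])
          simp [hv] at this
  have hcard : ∀ ℓ ≤ Fintype.card V + 1,
      ℓ ≤ (Finset.univ.filter fun v => (state g ℓ v).isSome).card := by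
    intro ℓ hℓ
    induction ℓ with
    | zero => exact Nat.zero_le _
    | succ k ih =>
      have h1 := ih (by omega)
      have h2 := hgrow k (by omega)
      omega
  have := hcard (Fintype.card V + 1) le_rfl
  have hle : (Finset.univ.filter fun v => (state g (Fintype.card V + 1) v).isSome).card
      ≤ Fintype.card V := by
    simpa using Finset.card_filter_le Finset.univ _
  omega

lemma state_stab (g : MPRS V N) : state g (M g + 1) = state g (M g) := by
  obtain ⟨ℓ, hℓ, hst⟩ := exists_stall g
  exact state_stall_ge hst (M g) (by simp [M]; omega)

/-- The final decision state. -/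
noncomputable def final (g : MPRS V N) : V → Option (ℕ × V × V) := state g (M g)

lemma state_final {g : MPRS V N} {ℓ : ℕ} {v : V} {r : ℕ × V × V}
    (h : state g ℓ v = some r) : final g v = some r := by
  rcases le_or_gt ℓ (M g) with hle | hlt
  · exact state_mono_le hle h
  · -- ℓ > M: propagate stabilisation
    obtain ⟨ℓ0, hℓ0, hst⟩ := exists_stall g
    have hstab : ∀ k, ℓ0 ≤ k → state g k = state g ℓ0 := by
      intro k hk
      induction k, hk using Nat.le_induction with
      | base => rfl
      | succ m hm ih => rw [state_stall_ge hst m hm, ih]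
    have h1 : state g ℓ = state g ℓ0 := hstab ℓ (by simp [M] at hlt; omega)
    have h2 : state g (M g) = state g ℓ0 := hstab (M g) (by simp [M]; omega)
    rw [final, h2, ← h1]; exact h

lemma final_level_le {g : MPRS V N} {v : V} {r : ℕ × V × V} (h : final g v = some r) :
    r.1 ≤ M g := (state_created h).1

/-- KEY LEMMA: if `v ∉ R` has a successor decided with a Good endpoint at
level `ja`, then `v` is decided at level at most `ja + 1`. -/
lemma decided_of_good_succ {g : MPRS V N} {v a : V} {ja : ℕ} {ca τa : V}
    (hv : v ∉ g.totalTarget) (ha : a ∈ g.succ v)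
    (hrec : final g a = some (ja, ca, τa)) (hg : Good g (g.owner v) τa) :
    ∃ jv cv τv, final g v = some (jv, cv, τv) ∧ jv ≤ ja + 1 := by
  obtain ⟨hja_le, hcra⟩ := state_created hrec
  cases hjv : state g ja v with
  | some r =>
    obtain ⟨hle, -⟩ := state_created hjv
    exact ⟨r.1, r.2.1, r.2.2, state_final hjv, by omega⟩
  | none =>
    have h1 : ∃ p : V × V, p.1 ∈ g.succ v ∧ (∃ c, state g ja p.1 = some (ja, c, p.2)) ∧
        Good g (g.owner v) p.2 := ⟨(a, τa), ha, ⟨ca, hcra⟩, hg⟩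
    have : state g (ja + 1) v = some (ja + 1, h1.choose.1, h1.choose.2) := by
      show stateStep g (state g ja) ja v = _
      rw [stateStep, if_neg (by simp [hjv]), dif_pos h1]
    exact ⟨ja + 1, h1.choose.1, h1.choose.2, state_final this, le_refl _⟩

/-- An undecided vertex has an undecided successor. -/
lemma undec_succ {g : MPRS V N} {v : V} (hv : v ∉ g.totalTarget)
    (hund : final g v = none) : ∃ a ∈ g.succ v, final g a = none := by
  by_contra hcon
  push_neg at hcon
  have hall : ∀ b ∈ g.succ v, ∃ rb, final g b = some rb := by
    intro b hb
    cases hfb : final g b with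
    | none => exact absurd hfb (hcon b hb)
    | some rb => exact ⟨rb, rfl⟩
  by_cases hgood : ∃ a ∈ g.succ v, ∃ ja ca τa, final g a = some (ja, ca, τa) ∧
      Good g (g.owner v) τa
  · obtain ⟨a, ha, ja, ca, τa, hra, hg⟩ := hgood
    obtain ⟨jv, cv, τv, hfv, -⟩ := decided_of_good_succ hv ha hra hg
    rw [hund] at hfv; exact absurd hfv (by simp)
  · push_neg at hgood
    -- all successors decided, none Good: E2 applies at the max level
    obtain ⟨a, ha, hmax⟩ := Finset.exists_max_image (g.succ v)
      (fun b => ((final g b).map Prod.fst).getD 0) (g.succ_nonempty v)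
    obtain ⟨ra, hra⟩ := hall a ha
    set jm := ra.1 with hjm
    have hja : ((final g a).map Prod.fst).getD 0 = jm := by rw [hra]; rfl
    have hvnone : state g jm v = none := by
      cases hsv : state g jm v with
      | none => rfl
      | some r => rw [state_final hsv] at hund; exact absurd hund (by simp)
    have hrec_a : state g jm a = some ra := (state_created hra).2
    -- all successor records live in `state g jm`
    have hrecs : ∀ b ∈ g.succ v, ∃ rb, state g jm b = some rb := by
      intro b hb
      obtain ⟨rb, hrb⟩ := hall b hb
      have hb_le : rb.1 ≤ jm := by
        have := hmax b hb
        rw [hja, hrb] at this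
        simpa using this
      exact ⟨rb, state_mono_le hb_le (state_created hrb).2⟩
    have hsome : (stateStep g (state g jm) jm v).isSome := by
      rw [stateStep, if_neg (by simp [hvnone])]
      by_cases h1 : ∃ p : V × V, p.1 ∈ g.succ v ∧
          (∃ c, state g jm p.1 = some (jm, c, p.2)) ∧ Good g (g.owner v) p.2
      · rw [dif_pos h1]; rfl
      · rw [dif_neg h1, dif_pos ?h2]
        · rfl
        case h2 =>
          refine ⟨?_, ⟨(a, ra.2.2), ha, ra.2.1, by rw [hrec_a]⟩, ?_⟩
          · intro b hb; obtain ⟨rb, hrb⟩ := hrecs b hb; simp [hrb]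
          · intro b hb j c τ hrb
            have hfb : final g b = some (j, c, τ) := state_final hrb
            exact hgood b hb j c τ hfb
    obtain ⟨r, hr⟩ := Option.isSome_iff_exists.mp hsome
    have : final g v = some r := state_final (show state g (jm + 1) v = some r from hr)
    rw [hund] at this; exact absurd this (by simp)

end MPRSNE

namespace MPRSNE

open MPRS Classical

variable {V : Type} [Fintype V] [DecidableEq V] {N : ℕ}

/-- The constructed memoryless choice function. -/
noncomputable def F (g : MPRS V N) (v : V) : V :=
  ((final g v).map fun r => r.2.1).getD
    (if h : ∃ a ∈ g.succ v, final g a = none then h.choose else (g.succ_nonempty v).choose)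

lemma F_dec {g : MPRS V N} {v : V} {j : ℕ} {c τ : V} (h : final g v = some (j, c, τ)) :
    F g v = c := by simp [F, h]

lemma F_undec {g : MPRS V N} {v : V} (hv : v ∉ g.totalTarget) (h : final g v = none) :
    F g v ∈ g.succ v ∧ final g (F g v) = none := by
  have hex := undec_succ hv h
  obtain ⟨ha, hfa⟩ := hex.choose_spec
  simpa [F, h, dif_pos hex] using ⟨ha, hfa⟩

lemma final_nt {g : MPRS V N} {v : V} (hv : v ∉ g.totalTarget) {j : ℕ} {c τ : V}
    (h : final g v = some (j, c, τ)) :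
    ∃ j', j = j' + 1 ∧ c ∈ g.succ v ∧ (∃ c', final g c = some (j', c', τ)) ∧
      (Good g (g.owner v) τ ∨
        ∀ b ∈ g.succ v, ∃ jb cb τb, final g b = some (jb, cb, τb) ∧ jb ≤ j' ∧
          ¬ Good g (g.owner v) τb) := by
  obtain ⟨j', hj, hmem, ⟨c', hc⟩, hdich⟩ := state_rec_structure hv h
  refine ⟨j', hj, hmem, ⟨c', state_final hc⟩, ?_⟩
  rcases hdich with hg | hbad
  · exact Or.inl hg
  · refine Or.inr fun b hb => ?_
    obtain ⟨jb, cb, τb, hrb, hle, hng⟩ := hbad b hb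
    exact ⟨jb, cb, τb, state_final hrb, hle, hng⟩

lemma F_mem {g : MPRS V N} {v : V} (hv : v ∉ g.totalTarget) : F g v ∈ g.succ v := by
  cases hfv : final g v with
  | none =>
    rw [F, hfv]
    by_cases h : ∃ a ∈ g.succ v, final g a = none
    · simpa [dif_pos h] using h.choose_spec.1
    · simpa [dif_neg h] using (g.succ_nonempty v).choose_spec
  | some r =>
    obtain ⟨j', -, hmem, -, -⟩ := final_nt hv (show final g v = some (r.1, r.2.1, r.2.2) by
      rw [hfv])
    rw [F_dec (show final g v = some (r.1, r.2.1, r.2.2) by rw [hfv])]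
    exact hmem

/-- The constructed value function. -/
noncomputable def val (g : MPRS V N) (m : Fin N) : Option V → ℝ
  | none => 0
  | some v => ((final g v).map fun r => g.gamma ^ r.1 * g.q m (some r.2.2)).getD 0

lemma q_abs_le_one (g : MPRS V N) (m : Fin N) (s : Option V) : |g.q m s| ≤ 1 := by
  cases s with
  | none => simp [MPRS.q]
  | some v =>
    rw [MPRS.q]
    split
    · split <;> norm_num
    · norm_num

lemma q_not_mem_target {g : MPRS V N} {m : Fin N} {v : V} (h : v ∉ g.totalTarget) :
    g.q m (some v) = 0 := by
  rw [MPRS.q, if_neg]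
  intro hm
  exact h (Finset.mem_biUnion.mpr ⟨m, Finset.mem_univ m, hm⟩)

lemma gamma_nonneg (g : MPRS V N) : (0:ℝ) ≤ g.gamma := g.gamma_pos.le

lemma gamma_pow_le_one (g : MPRS V N) (j : ℕ) : g.gamma ^ j ≤ 1 :=
  pow_le_one₀ (gamma_nonneg g) g.gamma_lt_one.le

lemma val_abs_le_one (g : MPRS V N) (m : Fin N) (s : Option V) : |val g m s| ≤ 1 := by
  cases s with
  | none => simp [val]
  | some v =>
    cases hfv : final g v with
    | none => simp [val, hfv]
    | some r =>
      simp only [val, hfv, Option.map_some, Option.getD_some]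
      rw [abs_mul, abs_pow, abs_of_nonneg ((gamma_nonneg g))]
      calc g.gamma ^ r.1 * |g.q m (some r.2.2)| ≤ 1 * 1 := by
            apply mul_le_mul (gamma_pow_le_one g r.1) (q_abs_le_one g m _)
              (abs_nonneg _) zero_le_one
        _ = 1 := by norm_num

lemma val_target {g : MPRS V N} {m : Fin N} {v : V} (h : v ∈ g.totalTarget) :
    val g m (some v) = g.q m (some v) := by
  simp [val, state_final (state_zero_mem h)]

/-- Value recursion at a non-target vertex. -/
lemma val_rec {g : MPRS V N} (m : Fin N) {v : V} (hv : v ∉ g.totalTarget) :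
    val g m (some v) = g.gamma * val g m (some (F g v)) := by
  cases hfv : final g v with
  | none =>
    obtain ⟨-, hFu⟩ := F_undec hv hfv
    simp [val, hfv, hFu]
  | some r =>
    obtain ⟨j', hj, -, ⟨c', hc⟩, -⟩ := final_nt hv
      (show final g v = some (r.1, r.2.1, r.2.2) by rw [hfv])
    rw [F_dec (show final g v = some (r.1, r.2.1, r.2.2) by rw [hfv])]
    simp only [val, hfv, hc, Option.map_some, Option.getD_some, hj]
    ring

lemma val_nonpos_avoider {g : MPRS V N} {n : Fin N} (hn : g.reacher n = false)
    (s : Option V) : val g n s ≤ 0 := by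
  cases s with
  | none => simp [val]
  | some v =>
    cases hfv : final g v with
    | none => simp [val, hfv]
    | some r =>
      simp only [val, hfv, Option.map_some, Option.getD_some]
      apply mul_nonpos_of_nonneg_of_nonpos (pow_nonneg (gamma_nonneg g) _)
      rw [MPRS.q]
      split
      · rw [hn]; norm_num
      · exact le_refl 0

/-- THE core optimality property of the constructed profile. -/
lemma val_opt {g : MPRS V N} {v : V} (hv : v ∉ g.totalTarget) {a : V} (ha : a ∈ g.succ v) :
    val g (g.owner v) (some a) ≤ val g (g.owner v) (some (F g v)) := by
  set n := g.owner v with hn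
  cases hfv : final g v with
  | none =>
    -- v undecided: F v undecided, value 0
    obtain ⟨-, hFu⟩ := F_undec hv hfv
    have hval0 : val g n (some (F g v)) = 0 := by simp [val, hFu]
    rw [hval0]
    cases hra : final g a with
    | none => simp [val, hra]
    | some ra =>
      simp only [val, hra, Option.map_some, Option.getD_some]
      rcases hrc : g.reacher n with hfalse | htrue
      · apply mul_nonpos_of_nonneg_of_nonpos (pow_nonneg (gamma_nonneg g) _)
        rw [MPRS.q]; split
        · rw [hrc]; norm_num
        · exact le_refl 0
      · -- reacher: no Good successor possible; q at endpoint must be 0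
        by_cases hmem : ra.2.2 ∈ g.target n
        · exfalso
          have hg : Good g n ra.2.2 := by rw [Good, hrc]; simpa using hmem
          obtain ⟨jv, cv, τv, hfv', -⟩ := decided_of_good_succ hv ha
            (show final g a = some (ra.1, ra.2.1, ra.2.2) by rw [hra]) hg
          rw [hfv] at hfv'; exact absurd hfv' (by simp)
        · rw [MPRS.q, if_neg hmem, mul_zero]
  | some r =>
    obtain ⟨j', hj, -, ⟨c', hc⟩, hdich⟩ := final_nt hv
      (show final g v = some (r.1, r.2.1, r.2.2) by rw [hfv])
    rw [F_dec (show final g v = some (r.1, r.2.1, r.2.2) by rw [hfv])]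
    have hvalF : val g n (some r.2.1) = g.gamma ^ j' * g.q n (some r.2.2) := by
      simp [val, hc]
    rw [hvalF]
    rcases hrc : g.reacher n with hfalse | htrue
    · -- avoider
      by_cases hmem : r.2.2 ∈ g.target n
      · -- bad outcome: endpoint in own target.  Dichotomy must give allBad.
        have hng : ¬ Good g n r.2.2 := by rw [Good, hrc]; simpa using hmem
        rcases hdich with hg | hbad
        · exact absurd hg hng
        · obtain ⟨jb, cb, τb, hrb, hble, hnb⟩ := hbad a ha
          have hτb : τb ∈ g.target n := by
            by_contra hcon
            exact hnb (by rw [Good, hrc]; simpa using hcon)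
          simp only [val, hrb, Option.map_some, Option.getD_some]
          rw [MPRS.q, if_pos hτb, if_neg (by simp [hrc]), MPRS.q, if_pos hmem,
            if_neg (by simp [hrc])]
          have := pow_le_pow_of_le_one (gamma_nonneg g) g.gamma_lt_one.le hble
          nlinarith
      · -- good (zero) outcome for avoider: any alternative is ≤ 0
        rw [MPRS.q, if_neg hmem, mul_zero]
        exact val_nonpos_avoider (by simp [hrc]) _
    · -- reacher
      by_cases hmem : r.2.2 ∈ g.target n
      · -- positive outcome γ^j'
        rw [MPRS.q, if_pos hmem, if_pos (by simp [hrc]), mul_one]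
        cases hra : final g a with
        | none =>
          simp only [val, hra, Option.map_none, Option.getD_none]
          exact pow_nonneg (gamma_nonneg g) _
        | some ra =>
          simp only [val, hra, Option.map_some, Option.getD_some]
          by_cases hmema : ra.2.2 ∈ g.target n
          · -- Good alternative: level bound from the key lemma
            have hg : Good g n ra.2.2 := by rw [Good, hrc]; simpa using hmema
            obtain ⟨jv, cv, τv, hfv', hjle⟩ := decided_of_good_succ hv ha
              (show final g a = some (ra.1, ra.2.1, ra.2.2) by rw [hra]) hg
            rw [hfv] at hfv'
            have hreq : jv = j' + 1 := by
              have hr' : r = (jv, cv, τv) := Option.some.inj hfv'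
              rw [hr'] at hj; omega
            have hja : j' ≤ ra.1 := by omega
            rw [MPRS.q, if_pos hmema, if_pos (by simp [hrc]), mul_one]
            exact pow_le_pow_of_le_one (gamma_nonneg g) g.gamma_lt_one.le hja
          · rw [MPRS.q, if_neg hmema, mul_zero]
            exact pow_nonneg (gamma_nonneg g) _
      · -- zero outcome for the reacher: dichotomy must be allBad; alternatives are 0
        have hng : ¬ Good g n r.2.2 := by rw [Good, hrc]; simpa using hmem
        rcases hdich with hg | hbad
        · exact absurd hg hng
        · obtain ⟨jb, cb, τb, hrb, -, hnb⟩ := hbad a ha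
          have hτb : τb ∉ g.target n := by
            by_contra hcon
            exact hnb (by rw [Good, hrc]; simpa using hcon)
          simp only [val, hrb, Option.map_some, Option.getD_some]
          rw [MPRS.q, if_neg hτb, mul_zero, MPRS.q, if_neg hmem, mul_zero]

end MPRSNE

namespace MPRSNE

open MPRS Classical

variable {V : Type} [Fintype V] [DecidableEq V] {N : ℕ}

/-- The constructed (memoryless) strategy profile. -/
noncomputable def sigmaHat (g : MPRS V N) : Fin N → Strat V :=
  fun _ _ v => F g v

/-- The one-step dynamics under the constructed profile. -/
noncomputable def stepF (g : MPRS V N) : Option V → Option V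
  | none => none
  | some v => if v ∈ g.totalTarget then none else some (F g v)

lemma step_sigmaHat (g : MPRS V N) (h : List (Option V)) (s : Option V) :
    g.step (sigmaHat g) h s = stepF g s := by
  cases s with
  | none => rfl
  | some v => rfl

lemma playAux_sigmaHat (g : MPRS V N) :
    ∀ (t : ℕ) (h : List (Option V)) (s : Option V),
      g.playAux (sigmaHat g) t h s = (stepF g)^[t] s := by
  intro t
  induction t with
  | zero => intro h s; rfl
  | succ k ih =>
    intro h s
    rw [MPRS.playAux, ih, step_sigmaHat, ← Function.iterate_succ_apply]

lemma play_sigmaHat (g : MPRS V N) (s : Option V) (t : ℕ) :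
    g.play (sigmaHat g) s t = (stepF g)^[t] s := playAux_sigmaHat g t [] s

lemma stepF_none (g : MPRS V N) (t : ℕ) : (stepF g)^[t] none = none :=
  Function.iterate_fixed rfl t

/-- Along a decided orbit, the payoff of player `m` is `q m τ` exactly at the
level and `0` elsewhere. -/
lemma q_play_dec (g : MPRS V N) (m : Fin N) :
    ∀ (j : ℕ) (v c τ : V), final g v = some (j, c, τ) →
      ∀ t, g.q m ((stepF g)^[t] (some v)) = if t = j then g.q m (some τ) else 0 := by
  intro j
  induction j with
  | zero =>
    intro v c τ hfv t
    obtain ⟨hv, -, hτ⟩ := state_level_zero ((state_created hfv).2)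
    cases t with
    | zero => simp [hτ]
    | succ k =>
      have h1 : (stepF g)^[k+1] (some v) = none := by
        rw [Function.iterate_succ_apply, show stepF g (some v) = none by
          simp [stepF, hv], stepF_none]
      simp [h1, MPRS.q]
  | succ j' ih =>
    intro v c τ hfv t
    have hv : v ∉ g.totalTarget := by
      intro hmem
      rw [state_final (state_zero_mem hmem)] at hfv
      injection hfv with h'
      exact absurd (congrArg Prod.fst h').symm (by simp)
    obtain ⟨j'', hj, -, ⟨c', hc⟩, -⟩ := final_nt hv hfv
    have hj'' : j'' = j' := by omega
    subst hj''
    have hstep : stepF g (some v) = some c := by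
      simp [stepF, hv, F_dec hfv]
    cases t with
    | zero => simp [q_not_mem_target hv]
    | succ k =>
      rw [Function.iterate_succ_apply, hstep, ih c c' τ hc k]
      simp

lemma q_play_undec (g : MPRS V N) (m : Fin N) :
    ∀ (t : ℕ) (v : V), final g v = none → g.q m ((stepF g)^[t] (some v)) = 0 := by
  intro t
  induction t with
  | zero =>
    intro v hfv
    have hv : v ∉ g.totalTarget := by
      intro hmem
      rw [state_final (state_zero_mem hmem)] at hfv; exact absurd hfv (by simp)
    simpa using q_not_mem_target hv
  | succ k ih =>
    intro v hfv
    have hv : v ∉ g.totalTarget := by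
      intro hmem
      rw [state_final (state_zero_mem hmem)] at hfv; exact absurd hfv (by simp)
    obtain ⟨-, hFu⟩ := F_undec hv hfv
    rw [Function.iterate_succ_apply, show stepF g (some v) = some (F g v) by
      simp [stepF, hv]]
    exact ih (F g v) hFu

/-- The value of the constructed profile equals the constructed value function. -/
lemma Q_eq_val (g : MPRS V N) (m : Fin N) (s : Option V) :
    g.Q m s (sigmaHat g) = val g m s := by
  rw [MPRS.Q]
  cases s with
  | none =>
    have : ∀ t : ℕ, g.gamma ^ t * g.q m (g.play (sigmaHat g) none t) = 0 := by
      intro t; rw [play_sigmaHat, stepF_none]; simp [MPRS.q]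
    rw [tsum_congr this, tsum_zero]; simp [val]
  | some v =>
    cases hfv : final g v with
    | none =>
      have : ∀ t : ℕ, g.gamma ^ t * g.q m (g.play (sigmaHat g) (some v) t) = 0 := by
        intro t; rw [play_sigmaHat, q_play_undec g m t v hfv, mul_zero]
      rw [tsum_congr this, tsum_zero]; simp [val, hfv]
    | some r =>
      have hq := q_play_dec g m r.1 v r.2.1 r.2.2 (by rw [hfv])
      have hterm : ∀ t : ℕ, g.gamma ^ t * g.q m (g.play (sigmaHat g) (some v) t) =
          if t = r.1 then g.gamma ^ r.1 * g.q m (some r.2.2) else 0 := by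
        intro t
        rw [play_sigmaHat, hq t]
        by_cases ht : t = r.1 <;> simp [ht]
      rw [tsum_congr hterm, tsum_ite_eq]
      simp [val, hfv]

end MPRSNE

namespace MPRSNE

open MPRS Classical Filter Topology

variable {V : Type} [Fintype V] [DecidableEq V] {N : ℕ}

lemma val_none (g : MPRS V N) (m : Fin N) : val g m none = 0 := rfl

lemma q_none (g : MPRS V N) (m : Fin N) : g.q m none = 0 := rfl

/-- One-step deviation inequality: no unilateral deviation of player `n` can
improve on `val` in one step. -/
lemma step_ineq (g : MPRS V N) (n : Fin N) (σn : Strat V) (hval : g.ValidStrat n σn)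
    (h : List (Option V)) (s : Option V) :
    g.q n s + g.gamma * val g n (g.step (Function.update (sigmaHat g) n σn) h s) ≤
      val g n s := by
  cases s with
  | none =>
    simp [MPRS.step, val_none, q_none]
  | some v =>
    by_cases hv : v ∈ g.totalTarget
    · rw [show g.step (Function.update (sigmaHat g) n σn) h (some v) = none by
        simp [MPRS.step, hv], val_none, mul_zero, add_zero, val_target hv]
    · have hstep : g.step (Function.update (sigmaHat g) n σn) h (some v) =
          some ((Function.update (sigmaHat g) n σn) (g.owner v) h v) := by
        simp [MPRS.step, hv]
      rw [hstep, q_not_mem_target hv, zero_add, val_rec n hv]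
      by_cases hown : g.owner v = n
      · rw [hown, Function.update_self]
        apply mul_le_mul_of_nonneg_left _ (gamma_nonneg g)
        have := val_opt hv (hval h v hown hv)
        rwa [hown] at this
      · rw [Function.update_of_ne hown]
        exact le_refl _

/-- Telescoping bound on partial payoffs of a deviated play. -/
lemma telescope (g : MPRS V N) (n : Fin N) (σn : Strat V) (hval : g.ValidStrat n σn) :
    ∀ (T : ℕ) (h : List (Option V)) (s : Option V),
      (∑ t ∈ Finset.range T,
        g.gamma ^ t * g.q n (g.playAux (Function.update (sigmaHat g) n σn) t h s)) +
        g.gamma ^ T * val g n (g.playAux (Function.update (sigmaHat g) n σn) T h s) ≤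
      val g n s := by
  set σ' := Function.update (sigmaHat g) n σn with hσ'
  intro T
  induction T with
  | zero =>
    intro h s
    rw [Finset.range_zero, Finset.sum_empty, pow_zero, zero_add, one_mul]
    exact le_of_eq rfl
  | succ k ih =>
    intro h s
    have hsum : (∑ t ∈ Finset.range (k+1), g.gamma ^ t * g.q n (g.playAux σ' t h s)) =
        g.q n s + g.gamma * ∑ t ∈ Finset.range k,
          g.gamma ^ t * g.q n (g.playAux σ' t (h ++ [s]) (g.step σ' h s)) := by
      rw [Finset.sum_range_succ']
      simp only [pow_zero, one_mul]
      rw [add_comm]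
      congr 1
      rw [Finset.mul_sum]
      apply Finset.sum_congr rfl
      intro i _
      rw [show g.playAux σ' (i+1) h s = g.playAux σ' i (h ++ [s]) (g.step σ' h s) from rfl]
      ring
    have hplay : g.playAux σ' (k+1) h s = g.playAux σ' k (h ++ [s]) (g.step σ' h s) := rfl
    rw [hsum, hplay]
    have hih := ih (h ++ [s]) (g.step σ' h s)
    have h2 : g.q n s + g.gamma * (val g n (g.step σ' h s)) ≤ val g n s :=
      step_ineq g n σn hval h s
    have h3 : g.gamma * ((∑ t ∈ Finset.range k,
        g.gamma ^ t * g.q n (g.playAux σ' t (h ++ [s]) (g.step σ' h s))) +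
        g.gamma ^ k * val g n (g.playAux σ' k (h ++ [s]) (g.step σ' h s))) ≤
        g.gamma * val g n (g.step σ' h s) :=
      mul_le_mul_of_nonneg_left hih (gamma_nonneg g)
    calc g.q n s + g.gamma * ∑ t ∈ Finset.range k,
          g.gamma ^ t * g.q n (g.playAux σ' t (h ++ [s]) (g.step σ' h s)) +
          g.gamma ^ (k+1) * val g n (g.playAux σ' k (h ++ [s]) (g.step σ' h s))
        = g.q n s + g.gamma * ((∑ t ∈ Finset.range k,
            g.gamma ^ t * g.q n (g.playAux σ' t (h ++ [s]) (g.step σ' h s))) +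
            g.gamma ^ k * val g n (g.playAux σ' k (h ++ [s]) (g.step σ' h s))) := by ring
      _ ≤ g.q n s + g.gamma * val g n (g.step σ' h s) := by linarith
      _ ≤ val g n s := h2

/-- No deviation of player `n` improves on the constructed profile. -/
lemma NE_property (g : MPRS V N) (n : Fin N) (s₀ : Option V) (σn : Strat V)
    (hval : g.ValidStrat n σn) :
    g.Q n s₀ (Function.update (sigmaHat g) n σn) ≤ g.Q n s₀ (sigmaHat g) := by
  set σ' := Function.update (sigmaHat g) n σn with hσ'
  rw [Q_eq_val]
  have hsum : Summable (fun t : ℕ => g.gamma ^ t * g.q n (g.play σ' s₀ t)) := by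
    apply Summable.of_norm
    apply Summable.of_nonneg_of_le (fun t => norm_nonneg _)
      (fun t => ?_) (summable_geometric_of_lt_one (gamma_nonneg g) g.gamma_lt_one)
    rw [Real.norm_eq_abs, abs_mul, abs_pow, abs_of_nonneg (gamma_nonneg g)]
    calc g.gamma ^ t * |g.q n (g.play σ' s₀ t)| ≤ g.gamma ^ t * 1 :=
          mul_le_mul_of_nonneg_left (q_abs_le_one g n _) (pow_nonneg (gamma_nonneg g) t)
      _ = g.gamma ^ t := mul_one _
  have htendsto : Tendsto (fun T => ∑ t ∈ Finset.range T,
      g.gamma ^ t * g.q n (g.play σ' s₀ t)) atTop (𝓝 (g.Q n s₀ σ')) :=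
    hsum.hasSum.tendsto_sum_nat
  have hbound : ∀ T, (∑ t ∈ Finset.range T, g.gamma ^ t * g.q n (g.play σ' s₀ t)) ≤
      val g n s₀ + g.gamma ^ T := by
    intro T
    have h1 := telescope g n σn hval T [] s₀
    have h2 : -(g.gamma ^ T * val g n (g.playAux σ' T [] s₀)) ≤ g.gamma ^ T := by
      rw [neg_le]
      calc -(g.gamma ^ T) = g.gamma ^ T * (-1) := by ring
        _ ≤ g.gamma ^ T * val g n (g.playAux σ' T [] s₀) := by
            apply mul_le_mul_of_nonneg_left _ (pow_nonneg (gamma_nonneg g) T)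
            have := abs_le.mp (val_abs_le_one g n (g.playAux σ' T [] s₀))
            linarith [this.1]
    have : (∑ t ∈ Finset.range T, g.gamma ^ t * g.q n (g.play σ' s₀ t)) ≤
        val g n s₀ - g.gamma ^ T * val g n (g.playAux σ' T [] s₀) := by
      have := h1
      simp only [MPRS.play] at *
      linarith
    linarith
  have hlim : Tendsto (fun T : ℕ => val g n s₀ + g.gamma ^ T) atTop
      (𝓝 (val g n s₀ + 0)) :=
    tendsto_const_nhds.add
      (tendsto_pow_atTop_nhds_zero_of_lt_one (gamma_nonneg g) g.gamma_lt_one)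
  have := le_of_tendsto_of_tendsto' htendsto hlim hbound
  simpa using this

end MPRSNE


/-- Every quantitative MPRS game has a deterministic memoryless Nash
equilibrium `σ̂` whose value functions `u^m(s) := Q^m(s, σ̂)` satisfy the
equilibrium (optimality) equations. -/
theorem quantitative_MPRS_NE_optimality_equations
    {V : Type} [Fintype V] [DecidableEq V] {N : ℕ} (g : MPRS V N) :
    ∃ σhat : Fin N → MPRS.Strat V,
      (∀ n, g.ValidStrat n (σhat n)) ∧
      (∀ n, MPRS.Memoryless (σhat n)) ∧
      (∀ (n : Fin N) (s₀ : Option V) (σn : MPRS.Strat V), g.ValidStrat n σn →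
        g.Q n s₀ (Function.update σhat n σn) ≤ g.Q n s₀ σhat) ∧
      (let u : Fin N → Option V → ℝ := fun m s => g.Q m s σhat
       -- for `s ∈ Vₙ \ R`, the action `σ̂ⁿ(s)` attains the maximum of
       -- `qⁿ(s) + γ·uⁿ(a)` over out-neighbours `a` of `s`:
       (∀ (n : Fin N) (v : V), g.owner v = n → v ∉ g.totalTarget →
          ∀ a ∈ g.succ v,
            g.q n (some v) + g.gamma * u n (some a) ≤
              g.q n (some v) + g.gamma * u n (some (σhat n [] v))) ∧
       -- for all `n, m` and `s ∈ Vₙ \ R` : `uᵐ(s) = qᵐ(s) + γ·uᵐ(σ̂ⁿ(s))` :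
       (∀ (n m : Fin N) (v : V), g.owner v = n → v ∉ g.totalTarget →
          u m (some v) = g.q m (some v) + g.gamma * u m (some (σhat n [] v))) ∧
       -- for `s ∈ R ∪ {s̄}` and all `m` : `uᵐ(s) = qᵐ(s) + γ·uᵐ(s̄)` :
       (∀ (m : Fin N) (v : V), v ∈ g.totalTarget →
          u m (some v) = g.q m (some v) + g.gamma * u m none) ∧
       (∀ m : Fin N, u m none = g.q m none + g.gamma * u m none)) := by
  classical
  refine ⟨MPRSNE.sigmaHat g, ?_, ?_, ?_, ?_, ?_, ?_, ?_⟩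
  · -- validity
    intro n h v hown hv
    exact MPRSNE.F_mem hv
  · -- memoryless
    intro n h h' v
    rfl
  · -- Nash equilibrium
    intro n s₀ σn hval
    exact MPRSNE.NE_property g n s₀ σn hval
  · -- optimality of the chosen action
    intro n v hown hv a ha
    simp only [MPRSNE.Q_eq_val]
    apply add_le_add le_rfl
    apply mul_le_mul_of_nonneg_left _ (MPRSNE.gamma_nonneg g)
    have := MPRSNE.val_opt hv ha
    rw [hown] at this
    exact this
  · -- recursion at non-target vertices
    intro n m v hown hv
    simp only [MPRSNE.Q_eq_val]
    rw [MPRSNE.q_not_mem_target hv, zero_add]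
    exact MPRSNE.val_rec m hv
  · -- recursion at target vertices
    intro m v hv
    simp only [MPRSNE.Q_eq_val]
    rw [MPRSNE.val_none, mul_zero, add_zero]
    exact MPRSNE.val_target hv
  · -- recursion at the terminal state
    intro m
    simp only [MPRSNE.Q_eq_val]
    rw [MPRSNE.val_none, MPRSNE.q_none]
    ring
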